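/- In a locally finite topos, given an object E and an infinite sequence of monomorphisms A₀ → A₁ → ⋯ where each A_n is a subobject of E (i.e. admits a monomorphism into E compatible with the sequence), all the arrows in the sequence are isomorphisms from some point on. -/

import Mathlib

open CategoryTheory CategoryTheory.Limits

universe u v

/-- The former Mathlib class `ChosenFiniteProducts` (data of chosen finite products). -/
class ChosenFiniteProducts (C : Type u) [Category.{v} C] where
  product : (X Y : C) → LimitCone (pair X Y)
  terminal : LimitCone (Functor.empty.{0} C)

/-- The former Mathlib `CartesianClosed`: monoidal closed for the monoidal structure given by
the finite products. -/
abbrev CartesianClosed (C : Type u) [Category.{v} C] [HasFiniteProducts C] :=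
  @MonoidalClosed C _ (CartesianMonoidalCategory.ofHasFiniteProducts (C := C)).toMonoidalCategory

/-- A subobject classifier, phrased as a property of a category with a terminal object. -/
class HasSubobjectClassifier' (C : Type u) [Category.{v} C] [HasTerminal C] : Prop where
  exists_classifier : ∃ (Ω : C) (truth : ⊤_ C ⟶ Ω), ∀ {U X : C} (m : U ⟶ X), Mono m →
    ∃! χ : X ⟶ Ω, IsPullback m (terminal.from U) χ truth

theorem mono_subobject_sequence_stabilizes {C : Type u} [Category.{v} C] [HasFiniteLimits C] [ChosenFiniteProducts C]
    [CartesianClosed C] [HasSubobjectClassifier' C]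
    (locallyFinite : ∀ A B : C, Finite (A ⟶ B))
    (E : C) (A : ℕ → C) (g : ∀ n, A n ⟶ A (n + 1)) (hg : ∀ n, Mono (g n))
    (m : ∀ n, A n ⟶ E) (hm : ∀ n, Mono (m n))
    (compat : ∀ n, g n ≫ m (n + 1) = m n) :
    ∃ N, ∀ n ≥ N, IsIso (g n) := by
  obtain ⟨Ω, truth, hcl⟩ := HasSubobjectClassifier'.exists_classifier (C := C)
  haveI := locallyFinite E Ω
  -- `Subobject E` is finite, via the injection into `E ⟶ Ω` given by classifying maps.
  have hfin : Finite (Subobject E) := by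
    have hχ : ∀ P : Subobject E, IsPullback P.arrow (terminal.from _)
        ((hcl P.arrow inferInstance).choose) truth :=
      fun P => ((hcl P.arrow inferInstance).choose_spec).1
    refine Finite.of_injective (fun P : Subobject E => (hcl P.arrow inferInstance).choose) ?_
    intro P Q h
    have h' : (hcl P.arrow inferInstance).choose = (hcl Q.arrow inferInstance).choose := h
    have h1 := hχ P
    have h2 := hχ Q
    rw [h'] at h1
    exact Subobject.eq_of_comm (h1.isoIsPullback _ _ h2)
      (by simp)
  haveI := hm
  haveI := hg
  -- the sequence of subobjects is monotone
  set f : ℕ → Subobject E := fun n => Subobject.mk (m n) with hf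
  have hmono : Monotone f := by
    apply monotone_nat_of_le_succ
    intro n
    exact Subobject.mk_le_mk_of_comm (g n) (compat n)
  obtain ⟨N, -, hmax⟩ : ∃ N, N ∈ Set.univ ∧ ∀ a' ∈ Set.univ, f N ≤ f a' → f N = f a' := by
    obtain ⟨N, hN, hmax'⟩ :=
      Set.Finite.exists_maximalFor' f Set.univ (Set.toFinite _) ⟨0, trivial⟩
    exact ⟨N, hN, fun a' ha' h => le_antisymm h (hmax' ha' h)⟩
  refine ⟨N, fun n hn => ?_⟩
  have h1 : f n = f N := (hmax n trivial (hmono hn)).symm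
  have h2 : f (n + 1) = f N := (hmax (n + 1) trivial (hmono (le_trans hn (Nat.le_succ n)))).symm
  have heq : Subobject.mk (m n) = Subobject.mk (m (n + 1)) := h1.trans h2.symm
  have : g n = (Subobject.isoOfMkEqMk (m n) (m (n + 1)) heq).hom := by
    rw [← cancel_mono (m (n + 1)), compat n]
    simp [Subobject.isoOfMkEqMk, Subobject.ofMkLEMk_comp]
  rw [this]
  infer_instance
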